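/- arXiv:2108.11832 — 2 statements merged into one kernel-verified Lean document; each statement's English description precedes it below -/
import Mathlib

section
/- Let f : E → ℝ ∪ {∞} be locally Lipschitz continuous on its domain. If f is (b≤)-regular along a set M ⊆ dom f near a point x̄ ∈ M (meaning the epigraph of f is (b≤)-regular along the graph of f restricted to M near (x̄, f(x̄))), then the domain of f is (b≤)-regular along M near x̄. -/
open Filter Topology Metric
open scoped RealInnerProductSpace

section NormalCones

variable {F : Type*} [NormedAddCommGroup F] [InnerProductSpace ℝ F]

/-- The Fréchet normal cone to a set `Q` at a point `x`. -/
def frechetNormalCone (Q : Set F) (x : F) : Set F :=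
  {v | ∀ ε > 0, ∃ δ > 0, ∀ y ∈ Q, ‖y - x‖ < δ → ⟪v, y - x⟫ ≤ ε * ‖y - x‖}

/-- The limiting normal cone to a set `Q` at a point `x`. -/
def limitingNormalCone (Q : Set F) (x : F) : Set F :=
  {v | ∃ xs vs : ℕ → F, (∀ n, xs n ∈ Q) ∧ (∀ n, vs n ∈ frechetNormalCone Q (xs n)) ∧
    Tendsto xs atTop (𝓝 x) ∧ Tendsto vs atTop (𝓝 v)}

/-- `X` is `(b≤)`-regular along `Y` near a point `z`:
`⟪v, y − x⟫ ≤ o(‖y − x‖)·‖v‖` for `x ∈ X`, `y ∈ Y` near `z` and `v ∈ N_X(x)`. -/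
def BLeqRegularAt (X Y : Set F) (z : F) : Prop :=
  ∀ ε > 0, ∃ δ > 0, ∀ x ∈ X ∩ ball z δ, ∀ y ∈ Y ∩ ball z δ,
    ∀ v ∈ limitingNormalCone X x, ⟪v, y - x⟫ ≤ ε * ‖y - x‖ * ‖v‖

end NormalCones

variable {E : Type*} [NormedAddCommGroup E] [InnerProductSpace ℝ E]

/-- The epigraph of `f` with domain `D`, as a subset of the ℓ²-product `E ×₂ ℝ`. -/
def epiSet (D : Set E) (f : E → ℝ) : Set (WithLp 2 (E × ℝ)) :=
  {p | (WithLp.equiv 2 (E × ℝ) p).1 ∈ D ∧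
    f (WithLp.equiv 2 (E × ℝ) p).1 ≤ (WithLp.equiv 2 (E × ℝ) p).2}

/-- The graph of `f` restricted to `M`, as a subset of the ℓ²-product `E ×₂ ℝ`. -/
def gphSet (f : E → ℝ) (M : Set E) : Set (WithLp 2 (E × ℝ)) :=
  {p | (WithLp.equiv 2 (E × ℝ) p).1 ∈ M ∧
    (WithLp.equiv 2 (E × ℝ) p).2 = f (WithLp.equiv 2 (E × ℝ) p).1}

noncomputable def ι2 (x : E) (t : ℝ) : WithLp 2 (E × ℝ) := (WithLp.equiv 2 (E × ℝ)).symm (x, t)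

lemma ι2_sub (x y : E) (s t : ℝ) : ι2 x s - ι2 y t = ι2 (x - y) (s - t) := by
  simp [ι2, ← WithLp.toLp_sub]

lemma fst_norm_le (x : E) (t : ℝ) : ‖x‖ ≤ ‖ι2 x t‖ := by
  have h := WithLp.prod_norm_sq_eq_of_L2 (ι2 x t)
  have h1 : (ι2 x t).fst = x := rfl
  have h2 : (ι2 x t).snd = t := rfl
  rw [h1, h2, Real.norm_eq_abs] at h
  nlinarith [norm_nonneg (ι2 x t), norm_nonneg x, abs_nonneg t]

lemma snd_norm_le (x : E) (t : ℝ) : |t| ≤ ‖ι2 x t‖ := by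
  have h := WithLp.prod_norm_sq_eq_of_L2 (ι2 x t)
  have h1 : (ι2 x t).fst = x := rfl
  have h2 : (ι2 x t).snd = t := rfl
  rw [h1, h2, Real.norm_eq_abs] at h
  nlinarith [norm_nonneg (ι2 x t), norm_nonneg x, abs_nonneg t]

lemma ι2_norm_le (x : E) (t : ℝ) : ‖ι2 x t‖ ≤ ‖x‖ + |t| := by
  have h := WithLp.prod_norm_sq_eq_of_L2 (ι2 x t)
  have h1 : (ι2 x t).fst = x := rfl
  have h2 : (ι2 x t).snd = t := rfl
  rw [h1, h2, Real.norm_eq_abs] at h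
  nlinarith [norm_nonneg (ι2 x t), norm_nonneg x, abs_nonneg t]

lemma ι2_norm_v0 (v : E) : ‖ι2 v 0‖ = ‖v‖ := WithLp.norm_toLp_fst 2 E ℝ v

lemma ι2_inner (v : E) (x : E) (t : ℝ) : ⟪ι2 v 0, ι2 x t⟫ = ⟪v, x⟫ := by
  have : ⟪ι2 v 0, ι2 x t⟫ = ⟪(ι2 v 0).fst, (ι2 x t).fst⟫ + ⟪(ι2 v 0).snd, (ι2 x t).snd⟫ :=
    WithLp.prod_inner_apply _ _
  have h1 : (ι2 v 0).fst = v := rfl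
  have h2 : (ι2 v 0).snd = (0:ℝ) := rfl
  have h3 : (ι2 x t).fst = x := rfl
  rw [h1, h2, h3] at this
  simpa using this

lemma frechet_lift (D : Set E) (f : E → ℝ) (x v : E)
    (hv : v ∈ frechetNormalCone D x) :
    ι2 v 0 ∈ frechetNormalCone (epiSet D f) (ι2 x (f x)) := by
  intro ε hε
  obtain ⟨δ, hδ, hδ'⟩ := hv ε hε
  refine ⟨δ, hδ, ?_⟩
  rintro p ⟨hp1, _⟩ hpn
  have hpr : p = ι2 p.fst p.snd := rfl
  rw [hpr, ι2_sub, ι2_inner]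
  have hfst : ‖p.fst - x‖ ≤ ‖ι2 (p.fst - x) (p.snd - f x)‖ := fst_norm_le _ _
  have hpn' : ‖ι2 (p.fst - x) (p.snd - f x)‖ < δ := by rwa [hpr, ι2_sub] at hpn
  have := hδ' p.fst hp1 (lt_of_le_of_lt hfst hpn')
  calc ⟪v, p.fst - x⟫ ≤ ε * ‖p.fst - x‖ := this
    _ ≤ ε * ‖ι2 (p.fst - x) (p.snd - f x)‖ := by
        exact mul_le_mul_of_nonneg_left hfst hε.le

lemma limiting_lift (D : Set E) (f : E → ℝ) (x v : E)
    (hcont : ContinuousWithinAt f D x)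
    (hv : v ∈ limitingNormalCone D x) :
    ι2 v 0 ∈ limitingNormalCone (epiSet D f) (ι2 x (f x)) := by
  obtain ⟨xs, vs, hxsD, hfr, hxs, hvs⟩ := hv
  refine ⟨fun n => ι2 (xs n) (f (xs n)), fun n => ι2 (vs n) 0,
    fun n => ⟨hxsD n, le_refl _⟩, fun n => frechet_lift D f (xs n) (vs n) (hfr n), ?_, ?_⟩
  · rw [tendsto_iff_dist_tendsto_zero]
    have hxs0 : Tendsto (fun n => ‖xs n - x‖) atTop (𝓝 0) := by
      simpa using tendsto_iff_norm_sub_tendsto_zero.mp hxs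
    have hfx : Tendsto (fun n => f (xs n)) atTop (𝓝 (f x)) := by
      apply hcont.tendsto.comp
      rw [tendsto_nhdsWithin_iff]
      exact ⟨hxs, Eventually.of_forall hxsD⟩
    have hfx0 : Tendsto (fun n => |f (xs n) - f x|) atTop (𝓝 0) := by
      have h0 : Tendsto (fun n => f (xs n) - f x) atTop (𝓝 (f x - f x)) :=
        hfx.sub tendsto_const_nhds
      rw [sub_self] at h0
      simpa using h0.abs
    apply squeeze_zero (fun n => dist_nonneg)
      (g := fun n => ‖xs n - x‖ + |f (xs n) - f x|) ?_ (by simpa using hxs0.add hfx0)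
    intro n
    rw [dist_eq_norm, ι2_sub]
    exact ι2_norm_le _ _
  · rw [tendsto_iff_dist_tendsto_zero]
    have hvs0 : Tendsto (fun n => ‖vs n - v‖) atTop (𝓝 0) := by
      simpa using tendsto_iff_norm_sub_tendsto_zero.mp hvs
    apply squeeze_zero (fun n => dist_nonneg) (g := fun n => ‖vs n - v‖) ?_ hvs0
    intro n
    rw [dist_eq_norm, ι2_sub, sub_zero]
    calc ‖ι2 (vs n - v) 0‖ = ‖vs n - v‖ := ι2_norm_v0 _
      _ ≤ ‖vs n - v‖ := le_refl _

lemma cont_of_lip (D : Set E) (f : E → ℝ) (x : E) (K δ₀ : ℝ) (hK : 0 < K) (hδ₀ : 0 < δ₀)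
    (hL : ∀ y ∈ D ∩ ball x δ₀, ∀ z ∈ D ∩ ball x δ₀, |f y - f z| ≤ K * ‖y - z‖)
    (hxD : x ∈ D) : ContinuousWithinAt f D x := by
  rw [Metric.continuousWithinAt_iff]
  intro ε hε
  refine ⟨min δ₀ (ε / K), lt_min hδ₀ (div_pos hε hK), fun y hy hd => ?_⟩
  have hyd : dist y x < δ₀ := lt_of_lt_of_le hd (min_le_left _ _)
  have := hL y ⟨hy, mem_ball.mpr hyd⟩ x ⟨hxD, mem_ball_self hδ₀⟩
  rw [Real.dist_eq]
  calc |f y - f x| ≤ K * ‖y - x‖ := this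
    _ < K * (ε / K) := by
        apply mul_lt_mul_of_pos_left _ hK
        rw [← dist_eq_norm]
        exact lt_of_lt_of_le hd (min_le_right _ _)
    _ = ε := mul_div_cancel₀ ε hK.ne'

/-- If `f` is locally Lipschitz on its domain `D` and `(b≤)`-regular along
`M ⊆ D` near `x̄ ∈ M` (i.e. its epigraph is `(b≤)`-regular along the graph of `f|_M` near
`(x̄, f(x̄))`), then `D = dom f` is `(b≤)`-regular along `M` near `x̄`. -/
theorem domain_bLeqRegular_of_function_bLeqRegular
    (D : Set E) (f : E → ℝ) (M : Set E) (xbar : E) (hM : M ⊆ D) (hx : xbar ∈ M)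
    (hLip : ∀ x ∈ D, ∃ K > (0:ℝ), ∃ δ > (0:ℝ), ∀ y ∈ D ∩ ball x δ, ∀ z ∈ D ∩ ball x δ,
      |f y - f z| ≤ K * ‖y - z‖)
    (hfb : BLeqRegularAt (epiSet D f) (gphSet f M)
      ((WithLp.equiv 2 (E × ℝ)).symm (xbar, f xbar))) :
    BLeqRegularAt D M xbar := by
  intro ε hε
  obtain ⟨K, hK, δ₀, hδ₀, hL⟩ := hLip xbar (hM hx)
  have h1K : (0:ℝ) < 1 + K := by linarith
  obtain ⟨δ₁, hδ₁, hreg⟩ := hfb (ε / (1 + K)) (div_pos hε h1K)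
  refine ⟨min δ₀ (δ₁ / (1 + K)), lt_min hδ₀ (div_pos hδ₁ h1K), ?_⟩
  rintro x ⟨hxD, hxb⟩ y ⟨hyM, hyb⟩ v hv
  -- distances to xbar
  have hball : ∀ z : E, z ∈ D → z ∈ ball xbar (min δ₀ (δ₁ / (1 + K))) →
      ι2 z (f z) ∈ ball ((WithLp.equiv 2 (E × ℝ)).symm (xbar, f xbar)) δ₁ := by
    intro z hzD hzb
    have hzb' : ‖z - xbar‖ < min δ₀ (δ₁ / (1 + K)) := by
      rw [← dist_eq_norm]; exact mem_ball.mp hzb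
    have hz0 : z ∈ ball xbar δ₀ := mem_ball.mpr (lt_of_lt_of_le (mem_ball.mp hzb) (min_le_left _ _))
    have hlip := hL z ⟨hzD, hz0⟩ xbar ⟨hM hx, mem_ball_self hδ₀⟩
    rw [mem_ball, dist_eq_norm]
    have heq : ι2 z (f z) - (WithLp.equiv 2 (E × ℝ)).symm (xbar, f xbar)
        = ι2 (z - xbar) (f z - f xbar) := ι2_sub z xbar (f z) (f xbar)
    rw [heq]
    calc ‖ι2 (z - xbar) (f z - f xbar)‖ ≤ ‖z - xbar‖ + |f z - f xbar| := ι2_norm_le _ _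
      _ ≤ ‖z - xbar‖ + K * ‖z - xbar‖ := by linarith
      _ = (1 + K) * ‖z - xbar‖ := by ring
      _ < (1 + K) * (δ₁ / (1 + K)) := by
          exact mul_lt_mul_of_pos_left (lt_of_lt_of_le hzb' (min_le_right _ _)) h1K
      _ = δ₁ := mul_div_cancel₀ δ₁ h1K.ne'
  have hcont : ContinuousWithinAt f D x := by
    -- Lipschitz near x itself
    obtain ⟨K', hK', δ', hδ', hL'⟩ := hLip x hxD
    exact cont_of_lip D f x K' δ' hK' hδ' hL' hxD
  have hvlift := limiting_lift D f x v hcont hv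
  have hxepi : ι2 x (f x) ∈ epiSet D f := ⟨hxD, le_refl _⟩
  have hygph : ι2 y (f y) ∈ gphSet f M := ⟨hyM, rfl⟩
  have key := hreg (ι2 x (f x)) ⟨hxepi, hball x hxD hxb⟩ (ι2 y (f y))
    ⟨hygph, hball y (hM hyM) hyb⟩ (ι2 v 0) hvlift
  rw [ι2_sub, ι2_inner, ι2_norm_v0] at key
  -- bound the product norm
  have hx0 : x ∈ ball xbar δ₀ := mem_ball.mpr (lt_of_lt_of_le (mem_ball.mp hxb) (min_le_left _ _))
  have hy0 : y ∈ ball xbar δ₀ := mem_ball.mpr (lt_of_lt_of_le (mem_ball.mp hyb) (min_le_left _ _))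
  have hlipxy := hL y ⟨hM hyM, hy0⟩ x ⟨hxD, hx0⟩
  have hnb : ‖ι2 (y - x) (f y - f x)‖ ≤ (1 + K) * ‖y - x‖ := by
    calc ‖ι2 (y - x) (f y - f x)‖ ≤ ‖y - x‖ + |f y - f x| := ι2_norm_le _ _
      _ ≤ ‖y - x‖ + K * ‖y - x‖ := by linarith
      _ = (1 + K) * ‖y - x‖ := by ring
  calc ⟪v, y - x⟫ ≤ ε / (1 + K) * ‖ι2 (y - x) (f y - f x)‖ * ‖v‖ := key
    _ ≤ ε / (1 + K) * ((1 + K) * ‖y - x‖) * ‖v‖ := by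
        apply mul_le_mul_of_nonneg_right _ (norm_nonneg v)
        exact mul_le_mul_of_nonneg_left hnb (div_pos hε h1K).le
    _ = ε * ‖y - x‖ * ‖v‖ := by
        field_simp
end

section
/- Let F : Y → E be a C¹ map between Euclidean spaces, X ⊆ E a locally closed set, and x̄ ∈ Y with F(x̄) ∈ X. Suppose the transversality-type condition holds: there exist τ > 0 and a neighborhood U of x̄ such that ‖∇F(x)* v‖ ≥ τ‖v‖ for all x ∈ F^{-1}(X) ∩ U and v ∈ N_X(F(x)). If moreover F is C² with ∇F L-Lipschitz near x̄, N_{F^{-1}(X)}(x) ⊆ ∇F(x)* N_X(F(x)) near x̄, N_{F^{-1}(Y₀)}(y) = ∇F(y)* N_{Y₀}(F(y)) for y ∈ F^{-1}(Y₀) near x̄ (where Y₀ ⊆ X), F is ℓ-Lipschitz on U, and X is strongly (a)-regular along Y₀ with constant C, then F^{-1}(X) is strongly (a)-regular along F^{-1}(Y₀) near x̄ with constant (L + Cℓ²)/τ. -/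
open Filter Topology Metric
open scoped RealInnerProductSpace

section Helpers
variable {H : Type*} [NormedAddCommGroup H] [InnerProductSpace ℝ H]

lemma zero_mem_frechetNormalCone (Q : Set H) (x : H) : (0:H) ∈ frechetNormalCone Q x := by
  intro ε hε
  refine ⟨1, one_pos, fun y _ _ => ?_⟩
  simpa using mul_nonneg hε.le (norm_nonneg (y - x))

lemma smul_mem_frechetNormalCone {Q : Set H} {x v : H} {c : ℝ} (hc : 0 ≤ c)
    (hv : v ∈ frechetNormalCone Q x) : c • v ∈ frechetNormalCone Q x := by
  rcases hc.eq_or_lt with rfl | hc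
  · simpa using zero_mem_frechetNormalCone Q x
  · intro ε hε
    obtain ⟨δ, hδ, h⟩ := hv (ε / c) (by positivity)
    refine ⟨δ, hδ, fun y hy hyd => ?_⟩
    have h1 := h y hy hyd
    rw [real_inner_smul_left]
    calc c * ⟪v, y - x⟫ ≤ c * (ε / c * ‖y - x‖) :=
          mul_le_mul_of_nonneg_left h1 hc.le
      _ = ε * ‖y - x‖ := by field_simp

lemma smul_mem_limitingNormalCone {Q : Set H} {x v : H} {c : ℝ} (hc : 0 ≤ c)
    (hv : v ∈ limitingNormalCone Q x) : c • v ∈ limitingNormalCone Q x := by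
  obtain ⟨xs, vs, h1, h2, h3, h4⟩ := hv
  exact ⟨xs, fun n => c • vs n, h1, fun n => smul_mem_frechetNormalCone hc (h2 n), h3,
    h4.const_smul c⟩

lemma zero_mem_limitingNormalCone {Q : Set H} {x : H} (hx : x ∈ Q) :
    (0:H) ∈ limitingNormalCone Q x :=
  ⟨fun _ => x, fun _ => 0, fun _ => hx, fun _ => zero_mem_frechetNormalCone Q x,
    tendsto_const_nhds, tendsto_const_nhds⟩

end Helpers


/-- (Strong (a)-regularity of preimages under transversal maps.) Under the
stated quantitative transversality, Lipschitz, normal-cone-representation and strong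
(a)-regularity hypotheses, the preimage `F⁻¹(X)` is strongly (a)-regular along `F⁻¹(Y₀)` near
`x̄` with constant `(L + C ℓ²)/τ`. -/
theorem preimage_stronglyARegular
    {Y' E : Type*} [NormedAddCommGroup Y'] [InnerProductSpace ℝ Y'] [CompleteSpace Y']
    [NormedAddCommGroup E] [InnerProductSpace ℝ E] [CompleteSpace E]
    (F : Y' → E) (hF : ContDiff ℝ 2 F)
    (X Y0 : Set E) (hXclosed : IsClosed X) (hY0X : Y0 ⊆ X)
    (xbar : Y') (hxbar : F xbar ∈ X)
    (τ L ℓ C : ℝ) (hτ : 0 < τ) (hL : 0 ≤ L) (hℓ : 0 ≤ ℓ) (hC : 0 ≤ C)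
    (U : Set Y') (hUopen : IsOpen U) (hxU : xbar ∈ U)
    (V : Set E) (hVopen : IsOpen V) (hFxV : F xbar ∈ V)
    (htrans : ∀ x ∈ F ⁻¹' X ∩ U, ∀ v ∈ limitingNormalCone X (F x),
      τ * ‖v‖ ≤ ‖(ContinuousLinearMap.adjoint (fderiv ℝ F x)) v‖)
    (hLipJ : ∀ x ∈ U, ∀ y ∈ U, ‖fderiv ℝ F x - fderiv ℝ F y‖ ≤ L * ‖x - y‖)
    (hLipF : ∀ x ∈ U, ∀ y ∈ U, ‖F x - F y‖ ≤ ℓ * ‖x - y‖)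
    (hNX : ∀ x ∈ F ⁻¹' X ∩ U, limitingNormalCone (F ⁻¹' X) x ⊆
      {w | ∃ v ∈ limitingNormalCone X (F x),
        w = (ContinuousLinearMap.adjoint (fderiv ℝ F x)) v})
    (hNY : ∀ y ∈ F ⁻¹' Y0 ∩ U, limitingNormalCone (F ⁻¹' Y0) y =
      {w | ∃ v ∈ limitingNormalCone Y0 (F y),
        w = (ContinuousLinearMap.adjoint (fderiv ℝ F y)) v})
    (hstronga : ∀ u ∈ X ∩ V, ∀ y ∈ Y0 ∩ V, ∀ v ∈ limitingNormalCone X u, v ≠ 0 →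
      infDist (‖v‖⁻¹ • v) (limitingNormalCone Y0 y) ≤ C * ‖u - y‖) :
    ∃ δ > (0:ℝ), ∀ x ∈ F ⁻¹' X ∩ ball xbar δ, ∀ y ∈ F ⁻¹' Y0 ∩ ball xbar δ,
      ∀ w ∈ limitingNormalCone (F ⁻¹' X) x, w ≠ 0 →
      infDist (‖w‖⁻¹ • w) (limitingNormalCone (F ⁻¹' Y0) y) ≤
        ((L + C * ℓ ^ 2) / τ) * ‖x - y‖ := by
  -- choose δ so that the ball is inside U and maps into V
  have hmem : U ∩ F ⁻¹' V ∈ 𝓝 xbar := by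
    refine Filter.inter_mem (hUopen.mem_nhds hxU) ?_
    exact (hVopen.preimage hF.continuous).mem_nhds hFxV
  obtain ⟨δ, hδpos, hball⟩ := Metric.mem_nhds_iff.mp hmem
  refine ⟨δ, hδpos, ?_⟩
  rintro x ⟨hxX, hxb⟩ y ⟨hyY, hyb⟩ w hw hw0
  have hxU' : x ∈ U := (hball hxb).1
  have hyU' : y ∈ U := (hball hyb).1
  have hFxV' : F x ∈ V := (hball hxb).2
  have hFyV' : F y ∈ V := (hball hyb).2
  obtain ⟨v, hv, hwv⟩ := hNX x ⟨hxX, hxU'⟩ hw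
  have hv0 : v ≠ 0 := by
    rintro rfl
    exact hw0 (by simp [hwv])
  have hvnorm : 0 < ‖v‖ := norm_pos_iff.mpr hv0
  have hwnorm : 0 < ‖w‖ := norm_pos_iff.mpr hw0
  have hτv : τ * ‖v‖ ≤ ‖w‖ := by
    have := htrans x ⟨hxX, hxU'⟩ v hv
    rwa [← hwv] at this
  -- Lipschitz bound on ‖fderiv ℝ F y‖
  have hlip : LipschitzOnWith (Real.toNNReal ℓ) F U := by
    intro a ha b hb
    rw [edist_dist, edist_dist]
    have h1 : dist (F a) (F b) ≤ ℓ * dist a b := by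
      simpa [dist_eq_norm] using hLipF a ha b hb
    calc ENNReal.ofReal (dist (F a) (F b)) ≤ ENNReal.ofReal (ℓ * dist a b) :=
          ENNReal.ofReal_le_ofReal h1
      _ = ENNReal.ofReal ℓ * ENNReal.ofReal (dist a b) :=
          ENNReal.ofReal_mul hℓ
      _ = (Real.toNNReal ℓ : ENNReal) * ENNReal.ofReal (dist a b) := by
          rw [ENNReal.ofReal]
  have hdy : HasFDerivAt F (fderiv ℝ F y) y :=
    ((hF.differentiable two_ne_zero) y).hasFDerivAt
  have hopy : ‖fderiv ℝ F y‖ ≤ ℓ := by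
    have := hdy.le_of_lipschitzOn (hUopen.mem_nhds hyU') hlip
    simpa [Real.coe_toNNReal ℓ hℓ] using this
  -- strong (a)-regularity at (F x, F y)
  have hstr : infDist (‖v‖⁻¹ • v) (limitingNormalCone Y0 (F y)) ≤ C * ‖F x - F y‖ :=
    hstronga (F x) ⟨hxX, hFxV'⟩ (F y) ⟨hyY, hFyV'⟩ v hv hv0
  have hFxy : ‖F x - F y‖ ≤ ℓ * ‖x - y‖ := hLipF x hxU' y hyU'
  -- prove the bound up to an arbitrary ε > 0
  refine le_of_forall_pos_le_add fun ε hε => ?_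
  set ε₁ : ℝ := ε * τ / (ℓ + 1) with hε₁def
  have hε₁ : 0 < ε₁ := by positivity
  have hne : (limitingNormalCone Y0 (F y)).Nonempty := ⟨0, zero_mem_limitingNormalCone hyY⟩
  obtain ⟨z, hz, hzd⟩ := (Metric.infDist_lt_iff hne).mp
    (lt_of_le_of_lt hstr (lt_add_of_pos_right _ hε₁))
  -- the candidate point in the normal cone of the preimage of Y0
  set A := fderiv ℝ F x with hA
  set B := fderiv ℝ F y with hB
  set q : Y' := (ContinuousLinearMap.adjoint B) ((‖w‖⁻¹ * ‖v‖) • z) with hq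
  have hqmem : q ∈ limitingNormalCone (F ⁻¹' Y0) y := by
    rw [hNY y ⟨hyY, hyU'⟩]
    exact ⟨(‖w‖⁻¹ * ‖v‖) • z,
      smul_mem_limitingNormalCone (by positivity) hz, rfl⟩
  have hle : infDist (‖w‖⁻¹ • w) (limitingNormalCone (F ⁻¹' Y0) y) ≤ ‖‖w‖⁻¹ • w - q‖ := by
    simpa [dist_eq_norm] using infDist_le_dist_of_mem hqmem
  -- rewrite the difference
  have hdiff : ‖w‖⁻¹ • w - q = ‖w‖⁻¹ • (w - (ContinuousLinearMap.adjoint B) (‖v‖ • z)) := by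
    rw [hq, smul_sub]
    congr 1
    rw [mul_smul, map_smul]
  have hzdist : ‖‖v‖⁻¹ • v - z‖ ≤ C * ‖F x - F y‖ + ε₁ := by
    have := hzd.le
    simpa [dist_eq_norm] using this
  -- the main norm estimate
  have key : ‖w - (ContinuousLinearMap.adjoint B) (‖v‖ • z)‖ ≤
      L * ‖x - y‖ * ‖v‖ + ℓ * (‖v‖ * (C * ‖F x - F y‖ + ε₁)) := by
    have h1 : ‖(ContinuousLinearMap.adjoint A) v - (ContinuousLinearMap.adjoint B) v‖ ≤
        L * ‖x - y‖ * ‖v‖ := by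
      have e1 : (ContinuousLinearMap.adjoint A) v - (ContinuousLinearMap.adjoint B) v =
          (ContinuousLinearMap.adjoint (A - B)) v := by
        rw [map_sub]; rfl
      rw [e1]
      calc ‖(ContinuousLinearMap.adjoint (A - B)) v‖ ≤
            ‖ContinuousLinearMap.adjoint (A - B)‖ * ‖v‖ :=
            ContinuousLinearMap.le_opNorm _ _
        _ = ‖A - B‖ * ‖v‖ := by
            rw [LinearIsometryEquiv.norm_map]
        _ ≤ L * ‖x - y‖ * ‖v‖ := by
            exact mul_le_mul_of_nonneg_right (hLipJ x hxU' y hyU') (norm_nonneg v)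
    have h2 : ‖(ContinuousLinearMap.adjoint B) v - (ContinuousLinearMap.adjoint B) (‖v‖ • z)‖ ≤
        ℓ * (‖v‖ * (C * ‖F x - F y‖ + ε₁)) := by
      have e2 : (ContinuousLinearMap.adjoint B) v - (ContinuousLinearMap.adjoint B) (‖v‖ • z) =
          (ContinuousLinearMap.adjoint B) (v - ‖v‖ • z) := by rw [map_sub]
      have e3 : v - ‖v‖ • z = ‖v‖ • (‖v‖⁻¹ • v - z) := by
        rw [smul_sub, smul_smul, mul_inv_cancel₀ hvnorm.ne', one_smul]
      calc ‖(ContinuousLinearMap.adjoint B) v - (ContinuousLinearMap.adjoint B) (‖v‖ • z)‖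
          = ‖(ContinuousLinearMap.adjoint B) (v - ‖v‖ • z)‖ := by rw [e2]
        _ ≤ ‖ContinuousLinearMap.adjoint B‖ * ‖v - ‖v‖ • z‖ :=
            ContinuousLinearMap.le_opNorm _ _
        _ = ‖B‖ * ‖v - ‖v‖ • z‖ := by rw [LinearIsometryEquiv.norm_map]
        _ ≤ ℓ * ‖v - ‖v‖ • z‖ := mul_le_mul_of_nonneg_right hopy (norm_nonneg _)
        _ = ℓ * (‖v‖ * ‖‖v‖⁻¹ • v - z‖) := by
            rw [e3, norm_smul, Real.norm_of_nonneg (norm_nonneg v)]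
        _ ≤ ℓ * (‖v‖ * (C * ‖F x - F y‖ + ε₁)) := by
            have := mul_le_mul_of_nonneg_left hzdist (norm_nonneg v)
            exact mul_le_mul_of_nonneg_left this hℓ
    calc ‖w - (ContinuousLinearMap.adjoint B) (‖v‖ • z)‖
        ≤ ‖w - (ContinuousLinearMap.adjoint B) v‖ +
          ‖(ContinuousLinearMap.adjoint B) v - (ContinuousLinearMap.adjoint B) (‖v‖ • z)‖ :=
          norm_sub_le_norm_sub_add_norm_sub _ _ _
      _ ≤ L * ‖x - y‖ * ‖v‖ + ℓ * (‖v‖ * (C * ‖F x - F y‖ + ε₁)) := by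
          refine add_le_add ?_ h2
          rw [hwv]
          exact h1
  -- combine everything
  have hwv' : ‖w‖⁻¹ * ‖v‖ ≤ τ⁻¹ := by
    rw [inv_mul_le_iff₀ hwnorm, ← div_eq_mul_inv, le_div_iff₀ hτ]
    linarith
  have hfinal : ‖‖w‖⁻¹ • w - q‖ ≤ ((L + C * ℓ ^ 2) / τ) * ‖x - y‖ + ε := by
    rw [hdiff, norm_smul, Real.norm_of_nonneg (inv_nonneg.mpr hwnorm.le)]
    have step1 : ‖w‖⁻¹ * ‖w - (ContinuousLinearMap.adjoint B) (‖v‖ • z)‖ ≤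
        ‖w‖⁻¹ * (L * ‖x - y‖ * ‖v‖ + ℓ * (‖v‖ * (C * ‖F x - F y‖ + ε₁))) :=
      mul_le_mul_of_nonneg_left key (inv_nonneg.mpr hwnorm.le)
    have hεbound : ℓ * ε₁ ≤ τ * ε := by
      rw [hε₁def]
      have hd : ℓ / (ℓ + 1) ≤ 1 := by
        rw [div_le_one (by linarith)]; linarith
      calc ℓ * (ε * τ / (ℓ + 1)) = (ℓ / (ℓ + 1)) * (ε * τ) := by ring
        _ ≤ 1 * (ε * τ) := mul_le_mul_of_nonneg_right hd (by positivity)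
        _ = τ * ε := by ring
    have hFxy2 : C * ‖F x - F y‖ ≤ C * (ℓ * ‖x - y‖) := mul_le_mul_of_nonneg_left hFxy hC
    have hwvnn : 0 ≤ ‖w‖⁻¹ * ‖v‖ := by positivity
    have step2 : ‖w‖⁻¹ * (L * ‖x - y‖ * ‖v‖ + ℓ * (‖v‖ * (C * ‖F x - F y‖ + ε₁))) ≤
        τ⁻¹ * (L * ‖x - y‖ + ℓ * (C * (ℓ * ‖x - y‖)) + ℓ * ε₁) := by
      have expand : ‖w‖⁻¹ * (L * ‖x - y‖ * ‖v‖ + ℓ * (‖v‖ * (C * ‖F x - F y‖ + ε₁))) =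
          (‖w‖⁻¹ * ‖v‖) * (L * ‖x - y‖ + ℓ * (C * ‖F x - F y‖ + ε₁)) := by ring
      rw [expand]
      have hrhsnn : 0 ≤ L * ‖x - y‖ + ℓ * (C * ‖F x - F y‖ + ε₁) := by positivity
      calc (‖w‖⁻¹ * ‖v‖) * (L * ‖x - y‖ + ℓ * (C * ‖F x - F y‖ + ε₁)) ≤
            τ⁻¹ * (L * ‖x - y‖ + ℓ * (C * ‖F x - F y‖ + ε₁)) :=
            mul_le_mul_of_nonneg_right hwv' hrhsnn
        _ ≤ τ⁻¹ * (L * ‖x - y‖ + ℓ * (C * (ℓ * ‖x - y‖) + ε₁)) := by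
            refine mul_le_mul_of_nonneg_left ?_ (inv_nonneg.mpr hτ.le)
            have := mul_le_mul_of_nonneg_left (add_le_add_right hFxy2 ε₁) hℓ
            linarith
        _ = τ⁻¹ * (L * ‖x - y‖ + ℓ * (C * (ℓ * ‖x - y‖)) + ℓ * ε₁) := by ring
    have step3 : τ⁻¹ * (L * ‖x - y‖ + ℓ * (C * (ℓ * ‖x - y‖)) + ℓ * ε₁) ≤
        ((L + C * ℓ ^ 2) / τ) * ‖x - y‖ + ε := by
      have e : τ⁻¹ * (L * ‖x - y‖ + ℓ * (C * (ℓ * ‖x - y‖))) =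
          ((L + C * ℓ ^ 2) / τ) * ‖x - y‖ := by
        rw [div_eq_inv_mul]
        ring
      have h4 : τ⁻¹ * (ℓ * ε₁) ≤ ε := by
        rw [inv_mul_le_iff₀ hτ]
        linarith [hεbound]
      calc τ⁻¹ * (L * ‖x - y‖ + ℓ * (C * (ℓ * ‖x - y‖)) + ℓ * ε₁)
          = τ⁻¹ * (L * ‖x - y‖ + ℓ * (C * (ℓ * ‖x - y‖))) + τ⁻¹ * (ℓ * ε₁) := by ring
        _ ≤ ((L + C * ℓ ^ 2) / τ) * ‖x - y‖ + ε := by rw [e]; exact add_le_add_right h4 _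
    linarith [step1, step2, step3]
  linarith [hle, hfinal]
end
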